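/- For all integers n ≥ 1 and s ≥ 1, the Lah polynomials of order s satisfy the recurrence ℒ_{n+1}^s(x) = x·ℒ_n^s(x) + n^s·ℒ_n^s(x) + B_n^s(x), where B_n^s(x) = Σ_{k=0}^{n} k^s · T_s(n,k) · x^k. -/

import Mathlib

open Finset Polynomial

/-- Lah numbers with higher level: `lahH s n k` satisfies
`lahH s 0 0 = 1`, `lahH s n 0 = lahH s 0 k = 0` for `n, k > 0`, and
`lahH s n k = lahH s (n-1) (k-1) + (n+k-1)^s * lahH s (n-1) k` for `n, k ≥ 1`. -/
def lahH (s : ℕ) : ℕ → ℕ → ℕ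
  | 0, 0 => 1
  | 0, _ + 1 => 0
  | _ + 1, 0 => 0
  | n + 1, k + 1 => lahH s n k + (n + k + 1) ^ s * lahH s n (k + 1)

/-- Stirling numbers of the first kind with higher level. -/
def stirling1H (s : ℕ) : ℕ → ℕ → ℕ
  | 0, 0 => 1
  | 0, _ + 1 => 0
  | _ + 1, 0 => 0
  | n + 1, k + 1 => stirling1H s n k + n ^ s * stirling1H s n (k + 1)

/-- Stirling numbers of the second kind with higher level. -/
def stirling2H (s : ℕ) : ℕ → ℕ → ℕ
  | 0, 0 => 1
  | 0, _ + 1 => 0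
  | _ + 1, 0 => 0
  | n + 1, k + 1 => stirling2H s n k + (k + 1) ^ s * stirling2H s n (k + 1)

/-- Ordinary Stirling numbers of the second kind. -/
def stirling2 : ℕ → ℕ → ℕ
  | 0, 0 => 1
  | 0, _ + 1 => 0
  | _ + 1, 0 => 0
  | n + 1, k + 1 => stirling2 n k + (k + 1) * stirling2 n (k + 1)

/-- Lah numbers of order `s`: `lahOrd s n k = ∑_{j=k}^{n} c_s(n,j) * S_s(j,k)`. -/
def lahOrd (s n k : ℕ) : ℕ := ∑ j ∈ Finset.Icc k n, stirling1H s n j * stirling2H s j k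

/-- Lah polynomial with higher level `L_n^s(x) = ∑_{k=0}^{n} L_s(n,k) x^k`. -/
noncomputable def lahHPoly (s n : ℕ) : Polynomial ℤ :=
  ∑ k ∈ Finset.range (n + 1), Polynomial.C (lahH s n k : ℤ) * Polynomial.X ^ k

/-- Lah polynomial of order `s`: `ℒ_n^s(x) = ∑_{k=0}^{n} T_s(n,k) x^k`. -/
noncomputable def lahOrdPoly (s n : ℕ) : Polynomial ℤ :=
  ∑ k ∈ Finset.range (n + 1), Polynomial.C (lahOrd s n k : ℤ) * Polynomial.X ^ k

/-- `B_n^s(x) = ∑_{k=0}^{n} k^s T_s(n,k) x^k`. -/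
noncomputable def Bpoly (s n : ℕ) : Polynomial ℤ :=
  ∑ k ∈ Finset.range (n + 1),
    Polynomial.C ((k ^ s * lahOrd s n k : ℕ) : ℤ) * Polynomial.X ^ k

lemma stirling1H_eq_zero (s : ℕ) : ∀ n k, n < k → stirling1H s n k = 0 := by
  intro n
  induction n with
  | zero => intro k hk; match k, hk with | k+1, _ => rfl
  | succ n ih =>
    intro k hk
    match k, hk with
    | k+1, hk =>
      show stirling1H s n k + n ^ s * stirling1H s n (k+1) = 0
      rw [ih k (by omega), ih (k+1) (by omega)]; ring

lemma stirling2H_eq_zero (s : ℕ) : ∀ n k, n < k → stirling2H s n k = 0 := by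
  intro n
  induction n with
  | zero => intro k hk; match k, hk with | k+1, _ => rfl
  | succ n ih =>
    intro k hk
    match k, hk with
    | k+1, hk =>
      show stirling2H s n k + (k+1) ^ s * stirling2H s n (k+1) = 0
      rw [ih k (by omega), ih (k+1) (by omega)]; ring

lemma lahOrd_eq_zero (s n k : ℕ) (h : n < k) : lahOrd s n k = 0 := by
  unfold lahOrd
  rw [Finset.Icc_eq_empty (by omega), Finset.sum_empty]

lemma lahOrd_succ_zero (s n : ℕ) : lahOrd s (n + 1) 0 = 0 := by
  unfold lahOrd
  apply Finset.sum_eq_zero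
  intro j hj
  match j with
  | 0 => show stirling1H s (n+1) 0 * 1 = 0; rfl
  | j+1 => show stirling1H s (n+1) (j+1) * stirling2H s (j+1) 0 = 0; simp [stirling2H]

lemma lahOrd_succ_succ (s n k : ℕ) :
    lahOrd s (n + 1) (k + 1) =
      lahOrd s n k + (n ^ s + (k + 1) ^ s) * lahOrd s n (k + 1) := by
  unfold lahOrd
  have h1 : Finset.Icc (k+1) (n+1) = Finset.image (· + 1) (Finset.Icc k n) := by
    rw [Finset.image_add_right_Icc]
  rw [h1, Finset.sum_image (by intro a _ b _ h; simp only at h; omega)]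
  have expand : ∀ x, stirling1H s (n+1) (x+1) * stirling2H s (x+1) (k+1) =
      stirling1H s n x * stirling2H s x k
      + (k+1)^s * (stirling1H s n x * stirling2H s x (k+1))
      + n^s * (stirling1H s n (x+1) * stirling2H s (x+1) (k+1)) := by
    intro x
    show (stirling1H s n x + n ^ s * stirling1H s n (x+1)) *
        (stirling2H s x k + (k+1) ^ s * stirling2H s x (k+1)) = _
    show _ = _ + _ + n^s * (stirling1H s n (x+1) *
        (stirling2H s x k + (k+1) ^ s * stirling2H s x (k+1)))
    ring
  rw [Finset.sum_congr rfl (fun x _ => expand x)]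
  rw [Finset.sum_add_distrib, Finset.sum_add_distrib, ← Finset.mul_sum, ← Finset.mul_sum]
  -- S2 : sum over Icc k n of c(n,x)S(x,k+1) = sum over Icc (k+1) n
  have hS2 : ∑ x ∈ Finset.Icc k n, stirling1H s n x * stirling2H s x (k+1)
      = ∑ x ∈ Finset.Icc (k+1) n, stirling1H s n x * stirling2H s x (k+1) := by
    rcases Nat.lt_or_ge n k with h | h
    · rw [Finset.Icc_eq_empty (by omega), Finset.Icc_eq_empty (by omega)]
    · rw [Finset.Icc_eq_cons_Ioc h, Finset.sum_cons, stirling2H_eq_zero s k (k+1) (by omega),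
        Finset.Icc_add_one_left_eq_Ioc]
      simp
  -- S3 : reindex back
  have hS3 : ∑ x ∈ Finset.Icc k n, stirling1H s n (x+1) * stirling2H s (x+1) (k+1)
      = ∑ x ∈ Finset.Icc (k+1) n, stirling1H s n x * stirling2H s x (k+1) := by
    rcases Nat.lt_or_ge n k with h | h
    · rw [Finset.Icc_eq_empty (by omega), Finset.Icc_eq_empty (by omega)]
      simp
    · have h2 : ∑ x ∈ Finset.Icc k n, stirling1H s n (x+1) * stirling2H s (x+1) (k+1)
          = ∑ x ∈ Finset.Icc (k+1) (n+1), stirling1H s n x * stirling2H s x (k+1) := by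
        rw [← Finset.image_add_right_Icc]
        exact (Finset.sum_image (g := fun x => x + 1)
          (f := fun x => stirling1H s n x * stirling2H s x (k+1))
          (fun a _ b _ hab => by simpa using hab)).symm
      rw [h2, Finset.sum_Icc_succ_top (by omega : k + 1 ≤ n + 1),
        stirling1H_eq_zero s n (n+1) (by omega)]
      ring
  rw [hS2, hS3]; ring

lemma coeff_lahOrdPoly_aux (s n m : ℕ) (c : ℕ → ℕ) (h0 : ∀ k, n < k → c k = 0) :
    (∑ k ∈ Finset.range (n + 1), Polynomial.C (c k : ℤ) * Polynomial.X ^ k).coeff m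
      = (c m : ℤ) := by
  rw [Polynomial.finset_sum_coeff]
  simp only [Polynomial.coeff_C_mul, Polynomial.coeff_X_pow, mul_ite, mul_one, mul_zero]
  rcases Nat.lt_or_ge m (n+1) with h | h
  · rw [Finset.sum_eq_single m (fun b _ hb => by simp [Ne.symm hb]) (by intro h'; simp at h'; omega)]
    simp
  · rw [Finset.sum_eq_zero (fun b hb => by
      simp only [Finset.mem_range] at hb
      simp [show m ≠ b by omega])]
    rw [h0 m (by omega)]; simp

theorem lahOrdPoly_rec' (n s : ℕ) (hn : 1 ≤ n) (hs : 1 ≤ s) :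
    (∑ k ∈ Finset.range (n + 1 + 1), Polynomial.C (lahOrd s (n+1) k : ℤ) * Polynomial.X ^ k) =
      Polynomial.X * (∑ k ∈ Finset.range (n + 1), Polynomial.C (lahOrd s n k : ℤ) * Polynomial.X ^ k)
      + Polynomial.C ((n : ℤ) ^ s) * (∑ k ∈ Finset.range (n + 1), Polynomial.C (lahOrd s n k : ℤ) * Polynomial.X ^ k)
      + (∑ k ∈ Finset.range (n + 1), Polynomial.C ((k ^ s * lahOrd s n k : ℕ) : ℤ) * Polynomial.X ^ k) := by
  ext m
  rw [Polynomial.coeff_add, Polynomial.coeff_add, Polynomial.coeff_C_mul,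
    coeff_lahOrdPoly_aux s (n+1) m _ (fun k hk => lahOrd_eq_zero s (n+1) k hk),
    coeff_lahOrdPoly_aux s n m _ (fun k hk => lahOrd_eq_zero s n k hk),
    coeff_lahOrdPoly_aux s n m (fun k => k ^ s * lahOrd s n k)
      (fun k hk => by simp [lahOrd_eq_zero s n k hk])]
  cases m with
  | zero =>
    rw [Polynomial.coeff_X_mul_zero, lahOrd_succ_zero]
    obtain ⟨n', rfl⟩ : ∃ n', n = n' + 1 := ⟨n - 1, by omega⟩
    rw [lahOrd_succ_zero]
    simp
  | succ k =>
    rw [Polynomial.coeff_X_mul, coeff_lahOrdPoly_aux s n k _ (fun j hj => lahOrd_eq_zero s n j hj),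
      lahOrd_succ_succ]
    push_cast
    ring

theorem lahOrdPoly_rec (n s : ℕ) (hn : 1 ≤ n) (hs : 1 ≤ s) :
    lahOrdPoly s (n + 1) =
      Polynomial.X * lahOrdPoly s n + Polynomial.C ((n : ℤ) ^ s) * lahOrdPoly s n +
        Bpoly s n := by
  unfold lahOrdPoly Bpoly
  exact lahOrdPoly_rec' n s hn hs
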